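/- If gcd(m,n) = 1, then K_m ⊗ K_n is isomorphic to the circulant graph on Z/mnZ where i is adjacent to j iff i - j is divisible by neither m nor n. -/

import Mathlib

open SimpleGraph

/-- A graph is circulant iff its automorphism group contains a transitive cyclic subgroup,
i.e. some automorphism whose iterates act transitively on the vertices. -/
def SimpleGraph.IsCirculant {V : Type*} (G : SimpleGraph V) : Prop :=
  ∃ φ : G ≃g G, ∀ v w : V, ∃ k : ℕ, (φ.toEquiv ^ k) v = w

/-- The tensor (categorical/Kronecker) product of simple graphs. -/
def SimpleGraph.tensor {α β : Type*} (G : SimpleGraph α) (H : SimpleGraph β) :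
    SimpleGraph (α × β) where
  Adj x y := G.Adj x.1 y.1 ∧ H.Adj x.2 y.2
  symm := ⟨fun _ _ h => ⟨h.1.symm, h.2.symm⟩⟩
  loopless := ⟨fun x h => G.loopless.irrefl x.1 h.1⟩

/-- The equivalence `Fin m ≃ ZMod m` for `m ≠ 0`. -/
def finEquivZMod (m : ℕ) [NeZero m] : Fin m ≃ ZMod m where
  toFun i := (i : ℕ)
  invFun z := ⟨z.val, z.val_lt⟩
  left_inv i := by
    ext
    simp [ZMod.val_natCast_of_lt i.isLt]
  right_inv z := by
    simp [ZMod.natCast_val, ZMod.cast_id]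

lemma cast_eq_zero_iff' (N k : ℕ) [NeZero N] [NeZero k] (a : ZMod N) :
    (ZMod.cast a : ZMod k) = 0 ↔ k ∣ a.val := by
  rw [← ZMod.natCast_val, ZMod.natCast_eq_zero_iff]

theorem stmt_12 (m n : ℕ) (hm : 1 ≤ m) (hn : 1 ≤ n) (hcop : Nat.Coprime m n) :
    Nonempty
      ((completeGraph (Fin m)).tensor (completeGraph (Fin n)) ≃g
        SimpleGraph.circulantGraph
          {z : ZMod (m * n) | ¬ (m : ℕ) ∣ z.val ∧ ¬ (n : ℕ) ∣ z.val}) := by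
  have : NeZero m := ⟨Nat.one_le_iff_ne_zero.mp hm⟩
  have : NeZero n := ⟨Nat.one_le_iff_ne_zero.mp hn⟩
  have : NeZero (m * n) := ⟨by positivity⟩
  let crt := ZMod.chineseRemainder hcop
  let e : (Fin m × Fin n) ≃ ZMod (m * n) :=
    ((finEquivZMod m).prodCongr (finEquivZMod n)).trans crt.toEquiv.symm
  have hcrt : ∀ a : ZMod (m * n),
      crt a = ((ZMod.cast a : ZMod m), (ZMod.cast a : ZMod n)) := by
    intro a
    have h1 : crt a = (ZMod.cast a : ZMod m × ZMod n) := rfl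
    rw [h1, ← ZMod.natCast_val]
    simp [Prod.ext_iff, ZMod.natCast_val]
  -- key adjacency characterization
  have key : ∀ a b : ZMod (m * n),
      (SimpleGraph.circulantGraph
          {z : ZMod (m * n) | ¬ (m : ℕ) ∣ z.val ∧ ¬ (n : ℕ) ∣ z.val}).Adj a b ↔
        (ZMod.cast a : ZMod m) ≠ (ZMod.cast b : ZMod m) ∧
        (ZMod.cast a : ZMod n) ≠ (ZMod.cast b : ZMod n) := by
    intro a b
    have hmem : ∀ c : ZMod (m * n),
        c ∈ {z : ZMod (m * n) | ¬ (m : ℕ) ∣ z.val ∧ ¬ (n : ℕ) ∣ z.val} ↔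
          (ZMod.cast c : ZMod m) ≠ 0 ∧ (ZMod.cast c : ZMod n) ≠ 0 := by
      intro c
      simp [Set.mem_setOf_eq, cast_eq_zero_iff']
    have hsub1 : ∀ c d : ZMod (m * n),
        (ZMod.cast (c - d) : ZMod m) = (ZMod.cast c : ZMod m) - ZMod.cast d :=
      fun c d => by rw [ZMod.cast_sub (dvd_mul_right m n)]
    have hsub2 : ∀ c d : ZMod (m * n),
        (ZMod.cast (c - d) : ZMod n) = (ZMod.cast c : ZMod n) - ZMod.cast d :=
      fun c d => by rw [ZMod.cast_sub (dvd_mul_left n m)]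
    rw [SimpleGraph.circulantGraph, SimpleGraph.fromRel_adj]
    simp only [hmem, hsub1, hsub2, sub_ne_zero]
    constructor
    · rintro ⟨hne, ⟨h1, h2⟩ | ⟨h1, h2⟩⟩
      · exact ⟨h1, h2⟩
      · exact ⟨fun h => h1 h.symm, fun h => h2 h.symm⟩
    · rintro ⟨h1, h2⟩
      exact ⟨fun h => h1 (by rw [h]), Or.inl ⟨h1, h2⟩⟩
  refine ⟨⟨e, ?_⟩⟩
  intro x y
  simp only [SimpleGraph.tensor, completeGraph, top_adj, key]
  have h1 : ∀ p : Fin m × Fin n,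
      ((ZMod.cast (e p) : ZMod m), (ZMod.cast (e p) : ZMod n)) =
        ((finEquivZMod m) p.1, (finEquivZMod n) p.2) := by
    intro p
    rw [← hcrt]
    simp [e, crt, Prod.map]
  have h2 := fun p => congrArg Prod.fst (h1 p)
  have h3 := fun p => congrArg Prod.snd (h1 p)
  simp only at h2 h3
  rw [h2 x, h2 y, h3 x, h3 y]
  simp only [ne_eq, EmbeddingLike.apply_eq_iff_eq]
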